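/- Stuttering invariance of consistent-set executions: let E be a sequence of operations (insert x or remove) executed on a list state, where remove deletes F(state) from the state. Suppose item s is inserted at some step and later removed by a remove that returns s. Let E' be E with that insert and that remove deleted. Then every other remove operation returns the same item in E' as it does in E. -/

import Mathlib

/-- `a` occurs (strictly) before `b` in the list `l`. -/
def Before {α : Type*} (a b : α) (l : List α) : Prop :=
  ∃ l₁ l₂ l₃ : List α, l = l₁ ++ a :: (l₂ ++ b :: l₃)

/-- A consistent choice function on lists. -/
structure ConsistentF {α : Type*} (F : List α → Option α) : Prop where
  empty : F [] = none
  mem : ∀ l : List α, l.Nodup → l ≠ [] → ∃ x ∈ l, F l = some x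
  cons : ∀ l₁ l₂ : List α, l₁.Nodup → l₂.Nodup → ∀ a b : α, a ≠ b →
    Before a b l₁ → F l₁ = some a → Before a b l₂ → F l₂ ≠ some b

/-- Operations on a consistent set. -/
inductive Op (α : Type*) where
  | ins : α → Op α
  | rem : Op α

/-- Apply one operation to the list state: insert appends, remove erases `F state`. -/
def applyOp {α : Type*} [DecidableEq α] (F : List α → Option α) (s : List α) : Op α → List α
  | .ins x => s ++ [x]
  | .rem => match F s with | none => s | some x => s.erase x

/-- The state after executing the first `k` operations of `E`, starting from `[]`. -/
def stateAt {α : Type*} [DecidableEq α] (F : List α → Option α) (E : List (Op α)) (k : ℕ) :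
    List α :=
  (E.take k).foldl (applyOp F) []

/-- The items inserted during an execution, in order. -/
def insertedItems {α : Type*} : List (Op α) → List α :=
  List.filterMap fun o => match o with | .ins x => some x | .rem => none

section Aux
variable {α : Type*}

theorem before_iff {a b : α} {l : List α} : Before a b l ↔ [a, b].Sublist l := by
  constructor
  · rintro ⟨l₁, l₂, l₃, rfl⟩
    have h1 : [a, b].Sublist (a :: (l₂ ++ b :: l₃)) :=
      List.cons_sublist_cons.2 (List.singleton_sublist.2 (by simp))
    exact h1.trans (List.sublist_append_right l₁ _)
  · intro h
    induction l with
    | nil => simp at h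
    | cons c t ih =>
      cases h with
      | cons _ h' =>
        obtain ⟨l₁, l₂, l₃, rfl⟩ := ih h'
        exact ⟨c :: l₁, l₂, l₃, rfl⟩
      | cons_cons _ h' =>
        obtain ⟨l₂, l₃, rfl⟩ := List.append_of_mem (List.singleton_sublist.1 h')
        exact ⟨[], l₂, l₃, rfl⟩

theorem pair_sublist_total {a b : α} {l : List α} (ha : a ∈ l) (hb : b ∈ l) (hab : a ≠ b) :
    [a, b].Sublist l ∨ [b, a].Sublist l := by
  induction l with
  | nil => simp at ha
  | cons c t ih =>
    rcases eq_or_ne a c with rfl | h1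
    · left
      exact List.cons_sublist_cons.2 (List.singleton_sublist.2 (by
        rcases List.mem_cons.1 hb with h | h
        · exact absurd h.symm hab
        · exact h))
    rcases eq_or_ne b c with rfl | h2
    · right
      exact List.cons_sublist_cons.2 (List.singleton_sublist.2 (by
        rcases List.mem_cons.1 ha with h | h
        · exact absurd h h1
        · exact h))
    have ha' : a ∈ t := by rcases List.mem_cons.1 ha with h | h; exact absurd h h1; exact h
    have hb' : b ∈ t := by rcases List.mem_cons.1 hb with h | h; exact absurd h h2; exact h
    exact (ih ha' hb').imp (·.cons c) (·.cons c)

theorem F_mem {F : List α → Option α} (hF : ConsistentF F) {l : List α} {a : α}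
    (hFl : F l = some a) (hnd : l.Nodup) : a ∈ l := by
  rcases eq_or_ne l [] with rfl | h
  · rw [hF.empty] at hFl; cases hFl
  · obtain ⟨x, hx, hFx⟩ := hF.mem l hnd h
    rw [hFx] at hFl
    injection hFl with h'
    exact h' ▸ hx

theorem choice_erase [DecidableEq α] {F : List α → Option α} (hF : ConsistentF F)
    {l : List α} (hnd : l.Nodup) {a s : α} (hFl : F l = some a) (has : a ≠ s) :
    F (l.erase s) = some a := by
  have hal : a ∈ l := F_mem hF hFl hnd
  by_cases hs : s ∈ l
  swap
  · rw [List.erase_of_not_mem hs]; exact hFl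
  have hnd' : (l.erase s).Nodup := hnd.erase s
  have ha' : a ∈ l.erase s := hnd.mem_erase_iff.2 ⟨has, hal⟩
  obtain ⟨b, hb, hFb⟩ := hF.mem _ hnd' (List.ne_nil_of_mem ha')
  rcases eq_or_ne b a with rfl | hba
  · exact hFb
  have hbl : b ∈ l := List.mem_of_mem_erase hb
  obtain ⟨hbs, -⟩ := hnd.mem_erase_iff.1 hb
  have key : ∀ x y : α, x ≠ s → y ≠ s → [x, y].Sublist l → [x, y].Sublist (l.erase s) := by
    intro x y hx hy hxy
    rw [hnd.erase_eq_filter]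
    simpa [hx, hy] using hxy.filter (fun z => z != s)
  rcases pair_sublist_total hal hbl hba.symm with h | h
  · exact absurd hFb
      (hF.cons l (l.erase s) hnd hnd' a b hba.symm (before_iff.2 h) hFl
        (before_iff.2 (key a b has hbs h)))
  · exact absurd hFl
      (hF.cons (l.erase s) l hnd' hnd b a hba (before_iff.2 (key b a hbs has h)) hFb
        (before_iff.2 h))

theorem foldl_sublist [DecidableEq α] (F : List α → Option α) :
    ∀ (L : List (Op α)) (init : List α),
      (L.foldl (applyOp F) init).Sublist (init ++ insertedItems L)
  | [], init => by simp [insertedItems]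
  | op :: L, init => by
    have h := foldl_sublist F L (applyOp F init op)
    cases op with
    | ins x =>
      simpa [applyOp, insertedItems, List.filterMap_cons, List.append_assoc] using h
    | rem =>
      refine h.trans ?_
      have h2 : (applyOp F init Op.rem).Sublist init := by
        unfold applyOp
        cases F init with
        | none => exact List.Sublist.refl _
        | some x => exact List.erase_sublist
      simpa [insertedItems, List.filterMap_cons] using h2.append_right (insertedItems L)

theorem stateAt_sublist [DecidableEq α] (F : List α → Option α) (E : List (Op α)) (k : ℕ) :
    (stateAt F E k).Sublist (insertedItems E) := by
  have h := foldl_sublist F (E.take k) []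
  simp only [List.nil_append] at h
  exact h.trans (List.Sublist.filterMap _ (List.take_sublist k E))

theorem state_nodup [DecidableEq α] {F : List α → Option α} {E : List (Op α)}
    (hnd : (insertedItems E).Nodup) (k : ℕ) : (stateAt F E k).Nodup :=
  (stateAt_sublist F E k).nodup hnd

theorem stateAt_succ [DecidableEq α] (F : List α → Option α) (E : List (Op α)) (k : ℕ) :
    stateAt F E (k + 1) = E[k]?.toList.foldl (applyOp F) (stateAt F E k) := by
  unfold stateAt
  rw [List.take_succ, List.foldl_append]

theorem stateAt_succ_op [DecidableEq α] (F : List α → Option α) {E : List (Op α)} {k : ℕ}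
    {op : Op α} (h : E[k]? = some op) :
    stateAt F E (k + 1) = applyOp F (stateAt F E k) op := by
  rw [stateAt_succ, h]; rfl

theorem take_eraseIdx_eq {l : List α} {n m : ℕ} (h : m ≤ n) :
    (l.eraseIdx n).take m = l.take m := by
  apply List.ext_getElem?
  intro t
  rw [List.getElem?_take, List.getElem?_take]
  split
  · exact List.getElem?_eraseIdx_of_lt (lt_of_lt_of_le ‹_› h)
  · rfl

theorem items_split {E : List (Op α)} {i : ℕ} {s : α} (hi : E[i]? = some (Op.ins s)) :
    insertedItems E = insertedItems (E.take i) ++ s :: insertedItems (E.drop (i + 1)) := by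
  obtain ⟨hlen, hgi⟩ := List.getElem?_eq_some_iff.1 hi
  conv_lhs => rw [← List.take_append_drop i E]
  rw [← List.getElem_cons_drop hlen, hgi]
  simp [insertedItems, List.filterMap_append, List.filterMap_cons]

theorem mem_items {E : List (Op α)} {t : ℕ} {x : α} (h : E[t]? = some (Op.ins x)) :
    x ∈ insertedItems E := by
  obtain ⟨hlen, hg⟩ := List.getElem?_eq_some_iff.1 h
  exact List.mem_filterMap.2 ⟨Op.ins x, hg ▸ List.getElem_mem hlen, rfl⟩

theorem ins_ne {E : List (Op α)} {i t : ℕ} {s x : α}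
    (hnd : (insertedItems E).Nodup) (hi : E[i]? = some (Op.ins s))
    (ht : i < t) (hx : E[t]? = some (Op.ins x)) : x ≠ s := by
  intro hxs
  rw [items_split hi] at hnd
  have hnd2 := (List.nodup_append.1 hnd).2.1
  have hx' : (E.drop (i + 1))[t - (i + 1)]? = some (Op.ins x) := by
    rw [List.getElem?_drop]
    rwa [Nat.add_sub_cancel' (by omega : i + 1 ≤ t)]
  exact (List.nodup_cons.1 hnd2).1 (hxs ▸ mem_items hx')

theorem persist [DecidableEq α] {F : List α → Option α} {E : List (Op α)} {s : α}
    {m : ℕ} : ∀ {n : ℕ}, m ≤ n → s ∉ stateAt F E m →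
    (∀ t, m ≤ t → t < n → E[t]? ≠ some (Op.ins s)) → s ∉ stateAt F E n := by
  intro n
  induction n with
  | zero => intro h hm _; rwa [Nat.le_zero.1 h] at hm
  | succ n ih =>
    intro hmn hm hins
    rcases eq_or_lt_of_le hmn with h | h
    · rwa [← h]
    have hn : s ∉ stateAt F E n :=
      ih (by omega) hm (fun t h1 h2 => hins t h1 (by omega))
    rw [stateAt_succ]
    cases hEn : E[n]? with
    | none => simpa using hn
    | some op =>
      cases op with
      | ins x =>
        have : x ≠ s := fun h => hins n (by omega) (by omega) (by rw [hEn, h])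
        simp only [Option.toList_some, List.foldl_cons, List.foldl_nil, applyOp]
        simp [hn, this, Ne.symm this]
      | rem =>
        simp only [Option.toList_some, List.foldl_cons, List.foldl_nil, applyOp]
        cases F (stateAt F E n) with
        | none => exact hn
        | some y => exact fun h => hn (List.mem_of_mem_erase h)
end Aux

theorem stmt8 {α : Type*} [DecidableEq α] (F : List α → Option α) (hF : ConsistentF F)
    (E : List (Op α)) (hnd : (insertedItems E).Nodup)
    (i j : ℕ) (hij : i < j) (hj : j < E.length)
    (s : α) (hi : E[i]? = some (Op.ins s)) (hjrem : E[j]? = some Op.rem)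
    (hret : F (stateAt F E j) = some s)
    (E' : List (Op α)) (hE' : E' = (E.eraseIdx j).eraseIdx i) :
    ∀ k, k < E.length → k ≠ i → k ≠ j → E[k]? = some Op.rem →
      F (stateAt F E' (if k < i then k else if k < j then k - 1 else k - 2)) =
        F (stateAt F E k) := by
  intro k hk hki hkj hkrem
  have hsplit := items_split hi
  have hndE := hnd
  rw [hsplit] at hndE
  have hsA : s ∉ insertedItems (E.take i) :=
    fun h => (List.disjoint_of_nodup_append hndE) h List.mem_cons_self
  have htake : ∀ m, m ≤ i → stateAt F E' m = stateAt F E m := by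
    intro m hm
    unfold stateAt
    rw [hE', take_eraseIdx_eq hm, take_eraseIdx_eq (le_trans hm (le_of_lt hij))]
  have hmid : ∀ m, i ≤ m → m + 1 < j → E'[m]? = E[m + 1]? := by
    intro m h1 h2
    rw [hE', List.getElem?_eraseIdx_of_ge h1, List.getElem?_eraseIdx_of_lt h2]
  have hhigh : ∀ m, i ≤ m → j ≤ m + 1 → E'[m]? = E[m + 2]? := by
    intro m h1 h2
    rw [hE', List.getElem?_eraseIdx_of_ge h1, List.getElem?_eraseIdx_of_ge h2]
  have hndst : ∀ m, (stateAt F E m).Nodup := state_nodup hnd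
  have hsub : (stateAt F E i).Sublist (insertedItems (E.take i)) := by
    have h := foldl_sublist F (E.take i) []
    simpa [stateAt] using h
  have hsi : s ∉ stateAt F E i := fun h => hsA (hsub.subset h)
  have hFne : ∀ m, i < m → m < j → E[m]? = some Op.rem →
      F (stateAt F E m) ≠ some s := by
    intro m h1 h2 hrem hFs
    have h3 : s ∉ stateAt F E (m + 1) := by
      rw [stateAt_succ_op F hrem]
      simp only [applyOp, hFs]
      exact (hndst m).not_mem_erase
    have h4 : s ∉ stateAt F E j :=
      persist (by omega) h3 (fun t ht1 ht2 hins => ins_ne hnd hi (by omega) hins rfl)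
    exact h4 (F_mem hF hret (hndst j))
  have claimC : ∀ m, i < m → m ≤ j →
      s ∈ stateAt F E m ∧ stateAt F E' (m - 1) = (stateAt F E m).erase s := by
    intro m
    induction m with
    | zero => intro h _; omega
    | succ m ih =>
      intro hm1 hm2
      rcases eq_or_lt_of_le (show i ≤ m by omega) with h | h
      · subst h
        rw [stateAt_succ_op F hi]
        constructor
        · simp [applyOp]
        · have h0 : stateAt F E' (i + 1 - 1) = stateAt F E i := by
            simpa using htake i le_rfl
          rw [h0]
          simp only [applyOp]
          rw [List.erase_append_right _ hsi]
          simp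
      · obtain ⟨hsm, heq⟩ := ih (by omega) (by omega)
        have hmlen : m < E.length := by omega
        obtain ⟨op, hop⟩ : ∃ op, E[m]? = some op :=
          ⟨E[m], (List.getElem?_eq_some_iff).2 ⟨hmlen, rfl⟩⟩
        have hE'm : E'[m - 1]? = some op := by
          have h1 : m - 1 + 1 = m := by omega
          rw [hmid (m - 1) (by omega) (by omega), h1]
          exact hop
        have hst' : stateAt F E' (m + 1 - 1) = applyOp F (stateAt F E' (m - 1)) op := by
          have h2 : m + 1 - 1 = (m - 1) + 1 := by omega
          rw [h2, stateAt_succ_op F hE'm]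
        cases op with
        | ins x =>
          have hxs : x ≠ s := ins_ne hnd hi (by omega) hop
          rw [stateAt_succ_op F hop, hst']
          constructor
          · simp [applyOp, hsm]
          · simp only [applyOp, heq]
            rw [List.erase_append_left _ hsm]
        | rem =>
          have hne : stateAt F E m ≠ [] := List.ne_nil_of_mem hsm
          obtain ⟨r, hr, hFr⟩ := hF.mem _ (hndst m) hne
          have hrs : r ≠ s := by
            intro h; exact hFne m (by omega) (by omega) hop (h ▸ hFr)
          have hFr' : F (stateAt F E' (m - 1)) = some r := by
            rw [heq]; exact choice_erase hF (hndst m) hFr hrs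
          rw [stateAt_succ_op F hop, hst']
          simp only [applyOp, hFr, hFr']
          constructor
          · exact (hndst m).mem_erase_iff.2 ⟨Ne.symm hrs, hsm⟩
          · rw [heq, List.erase_comm]
  have claimD : ∀ t, stateAt F E' (j - 1 + t) = stateAt F E (j + 1 + t) := by
    intro t
    induction t with
    | zero =>
      obtain ⟨hsj, heqj⟩ := claimC j hij le_rfl
      rw [Nat.add_zero, Nat.add_zero, stateAt_succ_op F hjrem]
      simp only [applyOp, hret]
      exact heqj
    | succ t ih =>
      have h1 : j - 1 + (t + 1) = (j - 1 + t) + 1 := by omega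
      have h2 : j + 1 + (t + 1) = (j + 1 + t) + 1 := by omega
      have h3 : j - 1 + t + 2 = j + 1 + t := by omega
      rw [h1, h2, stateAt_succ, stateAt_succ, ih, hhigh (j - 1 + t) (by omega) (by omega), h3]
  by_cases h1 : k < i
  · simp only [if_pos h1]
    rw [htake k (by omega)]
  · by_cases h2 : k < j
    · simp only [if_neg h1, if_pos h2]
      have hik : i < k := by omega
      obtain ⟨hsk, heqk⟩ := claimC k hik (by omega)
      have hne : stateAt F E k ≠ [] := List.ne_nil_of_mem hsk
      obtain ⟨r, hr, hFr⟩ := hF.mem _ (hndst k) hne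
      have hrs : r ≠ s := fun h => hFne k hik h2 hkrem (h ▸ hFr)
      rw [heqk, choice_erase hF (hndst k) hFr hrs, hFr]
    · simp only [if_neg h1, if_neg h2]
      have hk2 : k - 2 = j - 1 + (k - (j + 1)) := by omega
      have hk3 : j + 1 + (k - (j + 1)) = k := by omega
      rw [hk2, claimD, hk3]
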